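/- Let 0 < α < 2 and let f : ℝ → ℝ be a 2π-periodic C² function. Then for every x ∈ ℝ, f(x) · Λ^α f(x) = (1/2) Λ^α (f²)(x) + (1/2) I_α f(x). -/

import Mathlib

open MeasureTheory Real

/-- The constant `c_σ = Γ(1+σ) cos((1−σ)π/2) / π`. -/
noncomputable def cFrac (σ : ℝ) : ℝ :=
  Real.Gamma (1 + σ) * Real.cos ((1 - σ) * Real.pi / 2) / Real.pi

/-- The periodized kernel `K_σ(η) = ∑_{k∈ℤ} |η + 2kπ|^{-(1+σ)}`. -/
noncomputable def Kper (σ η : ℝ) : ℝ :=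
  ∑' k : ℤ, |η + 2 * (k : ℝ) * Real.pi| ^ (-(1 + σ))

/-- The fractional Laplacian `Λ^σ f` of a `2π`-periodic function, defined by
`Λ^σ f(x) = (c_σ/2) ∫_{-π}^{π} (2f(x) − f(x+η) − f(x−η)) K_σ(η) dη`. -/
noncomputable def fracLap (σ : ℝ) (f : ℝ → ℝ) (x : ℝ) : ℝ :=
  (cFrac σ / 2) *
    ∫ η in (-Real.pi)..Real.pi, (2 * f x - f (x + η) - f (x - η)) * Kper σ η

/-- `I_α f(x) = c_α ∫_{-π}^{π} (f(x) − f(x−η))² K_α(η) dη`. -/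
noncomputable def Ifrac (α : ℝ) (f : ℝ → ℝ) (x : ℝ) : ℝ :=
  cFrac α * ∫ η in (-Real.pi)..Real.pi, (f x - f (x - η)) ^ 2 * Kper α η

lemma Kper_nonneg (σ η : ℝ) : 0 ≤ Kper σ η :=
  tsum_nonneg fun _ => Real.rpow_nonneg (abs_nonneg _) _

lemma Kper_measurable (σ : ℝ) : Measurable (Kper σ) := by
  have h : Kper σ = fun η =>
      (∑' k : ℤ, ENNReal.ofReal (|η + 2 * (k : ℝ) * Real.pi| ^ (-(1 + σ)))).toReal := by
    funext η
    rw [ENNReal.tsum_toReal_eq (fun _ => ENNReal.ofReal_ne_top)]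
    simp only [ENNReal.toReal_ofReal (Real.rpow_nonneg (abs_nonneg _) _)]
    rfl
  rw [h]
  refine Measurable.ennreal_toReal (Measurable.ennreal_tsum fun k => ?_)
  exact ((measurable_id.add_const _).abs.pow measurable_const).ennreal_ofReal

lemma Kper_neg (σ η : ℝ) : Kper σ (-η) = Kper σ η := by
  unfold Kper
  rw [← (Equiv.neg ℤ).tsum_eq (fun k : ℤ => |η + 2 * (k : ℝ) * Real.pi| ^ (-(1 + σ)))]
  refine tsum_congr fun k => ?_
  have : |(-η) + 2 * (k : ℝ) * Real.pi| = |η + 2 * ((Equiv.neg ℤ k : ℤ) : ℝ) * Real.pi| := by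
    simp only [Equiv.neg_apply, Int.cast_neg]
    rw [← abs_neg]
    ring_nf
  rw [this]

lemma Kper_le {α : ℝ} (hα0 : 0 < α) :
    ∃ C : ℝ, 0 ≤ C ∧ ∀ η ∈ Set.Icc (-Real.pi) Real.pi,
      Kper α η ≤ |η| ^ (-(1 + α)) + C := by
  set p : ℝ := -(1 + α) with hp
  have hp0 : p < 0 := by rw [hp]; linarith
  have hsumu : Summable (fun k : ℤ => (Real.pi * |(k : ℝ)|) ^ p) := by
    have h1 : Summable (fun k : ℤ => Real.pi ^ p * |(k : ℝ)| ^ p) :=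
      (Real.summable_abs_int_rpow (by linarith : 1 < 1 + α)).mul_left _
    refine h1.congr fun k => ?_
    rw [Real.mul_rpow Real.pi_pos.le (abs_nonneg _)]
  refine ⟨∑' k : ℤ, (Real.pi * |(k : ℝ)|) ^ p, tsum_nonneg fun k => Real.rpow_nonneg (by positivity) _, ?_⟩
  intro η hη
  have hb : ∀ k : ℤ, |η + 2 * (k : ℝ) * Real.pi| ^ p ≤
      (if k = 0 then |η| ^ p else 0) + (Real.pi * |(k : ℝ)|) ^ p := by
    intro k
    by_cases hk : k = 0
    · subst hk
      simp only [if_pos rfl, Int.cast_zero, abs_zero, mul_zero, zero_mul, add_zero]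
      rw [Real.zero_rpow (ne_of_lt hp0)]
      simp
    · have hk1 : (1 : ℝ) ≤ |(k : ℝ)| := by
        rw [← Int.cast_abs]; exact_mod_cast Int.one_le_abs hk
      have hge : Real.pi * |(k : ℝ)| ≤ |η + 2 * (k : ℝ) * Real.pi| := by
        have h1 : |2 * (k : ℝ) * Real.pi| - |η| ≤ |η + 2 * (k : ℝ) * Real.pi| := by
          have := abs_sub_abs_le_abs_sub (2 * (k : ℝ) * Real.pi) (-η)
          simp only [sub_neg_eq_add] at this
          calc |2 * (k : ℝ) * Real.pi| - |η| ≤ |2 * (k : ℝ) * Real.pi + η| := by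
                simpa [abs_neg] using this
            _ = |η + 2 * (k : ℝ) * Real.pi| := by rw [add_comm]
        have h2 : |2 * (k : ℝ) * Real.pi| = 2 * |(k : ℝ)| * Real.pi := by
          rw [abs_mul, abs_mul]
          simp [abs_of_nonneg Real.pi_pos.le]
        have h3 : |η| ≤ Real.pi := abs_le.mpr ⟨hη.1, hη.2⟩
        nlinarith [Real.pi_pos]
      rw [if_neg hk, zero_add]
      exact Real.rpow_le_rpow_of_nonpos (by positivity) hge hp0.le
  have hsumb : Summable (fun k : ℤ => (if k = 0 then |η| ^ p else 0) + (Real.pi * |(k : ℝ)|) ^ p) := by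
    refine Summable.add ?_ hsumu
    exact summable_of_ne_finset_zero (s := {0}) (fun k hk => if_neg (by simpa using hk))
  have hsumt : Summable (fun k : ℤ => |η + 2 * (k : ℝ) * Real.pi| ^ p) :=
    Summable.of_nonneg_of_le (fun k => Real.rpow_nonneg (abs_nonneg _) _) hb hsumb
  calc Kper α η ≤ ∑' k : ℤ, ((if k = 0 then |η| ^ p else 0) + (Real.pi * |(k : ℝ)|) ^ p) :=
        Summable.tsum_le_tsum hb hsumt hsumb
    _ = (∑' k : ℤ, (if k = 0 then |η| ^ p else 0)) + ∑' k : ℤ, (Real.pi * |(k : ℝ)|) ^ p := by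
        rw [Summable.tsum_add (summable_of_ne_finset_zero (s := {0}) (fun k hk => if_neg (by simpa using hk))) hsumu]
    _ = |η| ^ p + ∑' k : ℤ, (Real.pi * |(k : ℝ)|) ^ p := by rw [tsum_ite_eq]

lemma abs_rpow_intervalIntegrable {r : ℝ} (hr : -1 < r) :
    IntervalIntegrable (fun x : ℝ => |x| ^ r) volume (-Real.pi) Real.pi := by
  have h1 : IntervalIntegrable (fun x : ℝ => |x| ^ r) volume 0 Real.pi := by
    have hbase : IntervalIntegrable (fun x : ℝ => x ^ r) volume 0 Real.pi :=
      intervalIntegral.intervalIntegrable_rpow' hr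
    refine hbase.mono_fun ?_ ?_
    · exact ((measurable_id.abs.pow measurable_const)).aestronglyMeasurable
    · rw [Set.uIoc_of_le Real.pi_pos.le]
      filter_upwards [ae_restrict_mem measurableSet_Ioc] with x hx
      rw [abs_of_pos hx.1]
  have h2 : IntervalIntegrable (fun x : ℝ => |x| ^ r) volume (-Real.pi) 0 := by
    have := ((IntervalIntegrable.iff_comp_neg (f := fun x : ℝ => |x| ^ r) (a := 0) (b := Real.pi)).mp h1)
    simp only [abs_neg, neg_zero] at this
    exact this.symm
  exact h2.trans h1

lemma integrable_mul_Kper {α : ℝ} (hα0 : 0 < α) (hα2 : α < 2)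
    {g : ℝ → ℝ} (hg : Measurable g) {M : ℝ} (hM0 : 0 ≤ M)
    (hM : ∀ η ∈ Set.Icc (-Real.pi) Real.pi, |g η| ≤ M * η ^ 2) :
    IntervalIntegrable (fun η => g η * Kper α η) volume (-Real.pi) Real.pi := by
  obtain ⟨C, hC0, hC⟩ := Kper_le hα0
  have hbint : IntervalIntegrable
      (fun η : ℝ => M * |η| ^ (1 - α) + M * C * η ^ 2) volume (-Real.pi) Real.pi := by
    refine IntervalIntegrable.add ((abs_rpow_intervalIntegrable (r := 1 - α) (by linarith)).const_mul M) ?_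
    exact (Continuous.intervalIntegrable (by continuity) _ _)
  refine hbint.mono_fun' ((hg.mul (Kper_measurable α)).aestronglyMeasurable) ?_
  rw [Set.uIoc_of_le (by linarith [Real.pi_pos] : -Real.pi ≤ Real.pi)]
  have hne : ∀ᵐ η ∂(volume.restrict (Set.Ioc (-Real.pi) Real.pi)), η ≠ (0:ℝ) := by
    refine ae_restrict_of_ae ?_
    exact (MeasureTheory.compl_mem_ae_iff).mpr Real.volume_singleton
  filter_upwards [ae_restrict_mem measurableSet_Ioc, hne] with η hη hη0
  have hηIcc : η ∈ Set.Icc (-Real.pi) Real.pi := ⟨hη.1.le, hη.2⟩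
  have hK := hC η hηIcc
  have hKnn := Kper_nonneg α η
  have habs : 0 < |η| := abs_pos.mpr hη0
  have hpow : η ^ 2 * |η| ^ (-(1 + α)) = |η| ^ (1 - α) := by
    rw [← sq_abs, ← Real.rpow_natCast |η| 2, ← Real.rpow_add habs]
    congr 1
    push_cast
    ring
  calc ‖g η * Kper α η‖ = |g η| * Kper α η := by
        rw [norm_mul, Real.norm_eq_abs, Real.norm_eq_abs, abs_of_nonneg hKnn]
    _ ≤ (M * η ^ 2) * (|η| ^ (-(1 + α)) + C) := by
        refine mul_le_mul (hM η hηIcc) hK hKnn ?_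
        nlinarith [sq_nonneg η]
    _ = M * (η ^ 2 * |η| ^ (-(1 + α))) + M * C * η ^ 2 := by ring
    _ = M * |η| ^ (1 - α) + M * C * η ^ 2 := by rw [hpow]

lemma lip_bound (f : ℝ → ℝ) (hC1 : ContDiff ℝ 1 f) (x : ℝ) :
    ∃ L : ℝ, 0 ≤ L ∧ ∀ y ∈ Set.Icc (x - Real.pi) (x + Real.pi),
      ∀ z ∈ Set.Icc (x - Real.pi) (x + Real.pi), |f y - f z| ≤ L * |y - z| := by
  obtain ⟨B, hB⟩ := (isCompact_Icc (a := x - Real.pi) (b := x + Real.pi)).exists_bound_of_continuousOn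
    ((hC1.continuous_deriv le_rfl).continuousOn)
  have hB0 : 0 ≤ B := le_trans (norm_nonneg _) (hB x (by constructor <;> nlinarith [Real.pi_pos]))
  refine ⟨B, hB0, fun y hy z hz => ?_⟩
  have := Convex.norm_image_sub_le_of_norm_deriv_le
    (fun w _ => (hC1.differentiable one_ne_zero).differentiableAt) hB (convex_Icc _ _) hz hy
  simpa [Real.norm_eq_abs] using this

lemma second_diff_bound (f : ℝ → ℝ) (hC2 : ContDiff ℝ 2 f) (x : ℝ) :
    ∃ M : ℝ, 0 ≤ M ∧ ∀ η ∈ Set.Icc (-Real.pi) Real.pi,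
      |2 * f x - f (x + η) - f (x - η)| ≤ M * η ^ 2 := by
  have hdiff : Differentiable ℝ f := hC2.differentiable (by norm_num)
  have hC1 : ContDiff ℝ 1 (deriv f) := by
    have h := (contDiff_succ_iff_deriv (n := 1)).mp (by exact_mod_cast hC2)
    exact h.2.2
  obtain ⟨B, hB0, hB⟩ := lip_bound (deriv f) hC1 x
  refine ⟨2 * B, by linarith, fun η hη => ?_⟩
  have hmem : ∀ t : ℝ, t ∈ Set.uIcc 0 η → x + t ∈ Set.Icc (x - Real.pi) (x + Real.pi) ∧
      x - t ∈ Set.Icc (x - Real.pi) (x + Real.pi) ∧ |t| ≤ |η| := by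
    intro t ht
    have h1 : |t| ≤ |η| := by
      rcases Set.mem_uIcc.mp ht with h | h
      · rw [abs_of_nonneg h.1, abs_of_nonneg (h.1.trans h.2)]; exact h.2
      · rw [abs_of_nonpos h.2, abs_of_nonpos (h.2.trans' h.1)]; linarith [h.1]
    have h2 : |η| ≤ Real.pi := abs_le.mpr ⟨hη.1, hη.2⟩
    have := abs_le.mp (h1.trans h2)
    exact ⟨⟨by linarith [this.1], by linarith [this.2]⟩,
      ⟨by linarith [this.2], by linarith [this.1]⟩, h1⟩
  set φ : ℝ → ℝ := fun t => 2 * f x - f (x + t) - f (x - t) with hφ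
  set φ' : ℝ → ℝ := fun t => deriv f (x - t) - deriv f (x + t) with hφ'
  have hd : ∀ t ∈ Set.uIcc 0 η, HasDerivWithinAt φ (φ' t) (Set.uIcc 0 η) t := by
    intro t _
    have hp : HasDerivAt (fun t : ℝ => f (x + t)) (deriv f (x + t)) t := by
      have h1 : HasDerivAt (fun t : ℝ => x + t) 1 t := (hasDerivAt_id t).const_add x
      simpa [Function.comp_def] using (hdiff (x + t)).hasDerivAt.comp t h1
    have hm : HasDerivAt (fun t : ℝ => f (x - t)) (-deriv f (x - t)) t := by
      have h1 : HasDerivAt (fun t : ℝ => x - t) (-1) t := (hasDerivAt_id t).const_sub x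
      simpa [Function.comp_def] using (hdiff (x - t)).hasDerivAt.comp t h1
    have : HasDerivAt φ (0 - deriv f (x + t) - (-deriv f (x - t))) t :=
      ((hasDerivAt_const t (2 * f x)).sub hp).sub hm
    have h2 : (0 : ℝ) - deriv f (x + t) - (-deriv f (x - t)) = φ' t := by rw [hφ']; ring
    exact (h2 ▸ this).hasDerivWithinAt
  have hbound : ∀ t ∈ Set.uIcc 0 η, ‖φ' t‖ ≤ (2 * B) * |η| := by
    intro t ht
    obtain ⟨hp, hm, hle⟩ := hmem t ht
    have := hB (x - t) hm (x + t) hp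
    have heq : |(x - t) - (x + t)| = 2 * |t| := by
      rw [show (x - t) - (x + t) = -(2*t) by ring, abs_neg, abs_mul]
      norm_num
    rw [Real.norm_eq_abs, hφ']
    calc |deriv f (x - t) - deriv f (x + t)| ≤ B * (2 * |t|) := heq ▸ this
      _ ≤ (2 * B) * |η| := by nlinarith [abs_nonneg t]
  have hkey := Convex.norm_image_sub_le_of_norm_hasDerivWithin_le hd hbound
    (convex_uIcc 0 η) (Set.left_mem_uIcc) (Set.right_mem_uIcc)
  have hφ0 : φ 0 = 0 := by simp only [hφ, add_zero, sub_zero]; ring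
  rw [hφ0, sub_zero, Real.norm_eq_abs, Real.norm_eq_abs, sub_zero] at hkey
  calc |2 * f x - f (x + η) - f (x - η)| = |φ η| := rfl
    _ ≤ 2 * B * |η| * |η| := hkey
    _ = 2 * B * η ^ 2 := by rw [mul_assoc, abs_mul_abs_self, sq]

theorem stmt10 (α : ℝ) (hα0 : 0 < α) (hα2 : α < 2)
    (f : ℝ → ℝ) (hC2 : ContDiff ℝ 2 f) (hper : Function.Periodic f (2 * Real.pi)) :
    ∀ x : ℝ, f x * fracLap α f x
      = (1 / 2) * fracLap α (fun y => f y ^ 2) x + (1 / 2) * Ifrac α f x := by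
  intro x
  have hfc : Continuous f := hC2.continuous
  have hC1 : ContDiff ℝ 1 f := hC2.of_le (by norm_num)
  obtain ⟨L, hL0, hL⟩ := lip_bound f hC1 x
  have hxmem : x ∈ Set.Icc (x - Real.pi) (x + Real.pi) := by
    constructor <;> nlinarith [Real.pi_pos]
  have hmem : ∀ η ∈ Set.Icc (-Real.pi) Real.pi,
      x - η ∈ Set.Icc (x - Real.pi) (x + Real.pi) ∧
      x + η ∈ Set.Icc (x - Real.pi) (x + Real.pi) := by
    intro η hη
    exact ⟨⟨by linarith [hη.2], by linarith [hη.1]⟩, ⟨by linarith [hη.1], by linarith [hη.2]⟩⟩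
  have hsq_bound : ∀ η ∈ Set.Icc (-Real.pi) Real.pi,
      |(f x - f (x - η)) ^ 2| ≤ L ^ 2 * η ^ 2 ∧ |(f x - f (x + η)) ^ 2| ≤ L ^ 2 * η ^ 2 := by
    intro η hη
    obtain ⟨hm, hp⟩ := hmem η hη
    have h1 := hL x hxmem (x - η) hm
    have h2 := hL x hxmem (x + η) hp
    rw [show x - (x - η) = η by ring] at h1
    rw [show x - (x + η) = -η by ring, abs_neg] at h2
    constructor
    · rw [abs_of_nonneg (sq_nonneg _), ← sq_abs]
      calc |f x - f (x - η)| ^ 2 ≤ (L * |η|) ^ 2 := by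
            exact pow_le_pow_left₀ (abs_nonneg _) h1 2
        _ = L ^ 2 * η ^ 2 := by rw [mul_pow, sq_abs]
    · rw [abs_of_nonneg (sq_nonneg _), ← sq_abs]
      calc |f x - f (x + η)| ^ 2 ≤ (L * |η|) ^ 2 := by
            exact pow_le_pow_left₀ (abs_nonneg _) h2 2
        _ = L ^ 2 * η ^ 2 := by rw [mul_pow, sq_abs]
  have h1 : IntervalIntegrable (fun η => (f x - f (x - η)) ^ 2 * Kper α η)
      volume (-Real.pi) Real.pi := by
    refine integrable_mul_Kper hα0 hα2 ?_ (by positivity : (0:ℝ) ≤ L ^ 2)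
      (fun η hη => (hsq_bound η hη).1)
    exact ((continuous_const.sub (hfc.comp (continuous_const.sub continuous_id))).pow 2).measurable
  have h2 : IntervalIntegrable (fun η => (f x - f (x + η)) ^ 2 * Kper α η)
      volume (-Real.pi) Real.pi := by
    refine integrable_mul_Kper hα0 hα2 ?_ (by positivity : (0:ℝ) ≤ L ^ 2)
      (fun η hη => (hsq_bound η hη).2)
    exact ((continuous_const.sub (hfc.comp (continuous_const.add continuous_id))).pow 2).measurable
  have hF2 : ContDiff ℝ 2 (fun y => f y ^ 2) := hC2.pow 2
  obtain ⟨M, hM0, hM⟩ := second_diff_bound (fun y => f y ^ 2) hF2 x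
  have h3 : IntervalIntegrable (fun η => (2 * f x ^ 2 - f (x + η) ^ 2 - f (x - η) ^ 2) * Kper α η)
      volume (-Real.pi) Real.pi := by
    refine integrable_mul_Kper hα0 hα2 ?_ hM0 (fun η hη => hM η hη)
    have : Continuous (fun η => 2 * f x ^ 2 - f (x + η) ^ 2 - f (x - η) ^ 2) := by
      continuity
    exact this.measurable
  have hsub : (∫ η in (-Real.pi)..Real.pi, (f x - f (x + η)) ^ 2 * Kper α η)
      = ∫ η in (-Real.pi)..Real.pi, (f x - f (x - η)) ^ 2 * Kper α η := by
    have h := intervalIntegral.integral_comp_neg (a := -Real.pi) (b := Real.pi)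
      (fun η => (f x - f (x - η)) ^ 2 * Kper α η)
    simp only [sub_neg_eq_add, Kper_neg, neg_neg] at h
    exact h
  have hfun : (fun η => f x * ((2 * f x - f (x + η) - f (x - η)) * Kper α η))
      = fun η => (1/2) * ((2 * f x ^ 2 - f (x + η) ^ 2 - f (x - η) ^ 2) * Kper α η)
        + ((1/2) * ((f x - f (x - η)) ^ 2 * Kper α η)
          + (1/2) * ((f x - f (x + η)) ^ 2 * Kper α η)) := by
    funext η
    ring
  unfold fracLap Ifrac
  rw [show f x * (cFrac α / 2 * ∫ η in (-Real.pi)..Real.pi,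
        (2 * f x - f (x + η) - f (x - η)) * Kper α η)
      = cFrac α / 2 * (f x * ∫ η in (-Real.pi)..Real.pi,
        (2 * f x - f (x + η) - f (x - η)) * Kper α η) by ring,
    ← intervalIntegral.integral_const_mul, hfun,
    intervalIntegral.integral_add (h3.const_mul _) ((h1.const_mul _).add (h2.const_mul _)),
    intervalIntegral.integral_add (h1.const_mul _) (h2.const_mul _),
    intervalIntegral.integral_const_mul, intervalIntegral.integral_const_mul,
    intervalIntegral.integral_const_mul, hsub]
  ring
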